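/- Let f(z) = C z^m exp(αz) ∏_{j=1}^∞ (1 + γ_j z) with C > 0, m = 0, α ≥ 0, γ_j ≥ γ_{j+1} ≥ 0, ∑ γ_j < ∞, and f(0) = C > 0. Let φ = log f in a neighborhood of 0 and φ^{(k)} = (D^k φ)(0). Then (-1)^{k-1} φ^{(k)} ≥ 0 for all k ∈ ℕ. -/

import Mathlib

open Complex Filter

private lemma sign_iteratedFDeriv_congr_nhds {f g : ℂ → ℂ} {x : ℂ} {n : ℕ}
    (h : f =ᶠ[nhds x] g) : iteratedFDeriv ℂ n f x = iteratedFDeriv ℂ n g x := by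
  rw [← iteratedFDerivWithin_univ, ← iteratedFDerivWithin_univ]
  exact Filter.EventuallyEq.iteratedFDerivWithin_eq (by rwa [nhdsWithin_univ]) h.self_of_nhds n

private lemma sign_iteratedDeriv_congr_nhds {f g : ℂ → ℂ} {x : ℂ} {n : ℕ}
    (h : f =ᶠ[nhds x] g) : iteratedDeriv n f x = iteratedDeriv n g x := by
  rw [iteratedDeriv_eq_iteratedFDeriv, iteratedDeriv_eq_iteratedFDeriv,
    sign_iteratedFDeriv_congr_nhds h]

private lemma sign_iteratedDeriv_const_add {f : ℂ → ℂ} {n : ℕ} (hn : 0 < n) (c : ℂ) (x : ℂ) :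
    iteratedDeriv n (fun z => c + f z) x = iteratedDeriv n f x := by
  rw [← iteratedDerivWithin_univ, ← iteratedDerivWithin_univ]
  exact iteratedDerivWithin_const_add hn c

set_option maxHeartbeats 1000000 in
/-- The sign rule: for a Laguerre entire function f(z) = C e^{αz} ∏ (1+γ_j z) with
C > 0, α ≥ 0, γ_j ≥ γ_{j+1} ≥ 0 summable, and φ = log f near 0 (analytic there),
the derivatives φ^{(k)}(0) are real and (-1)^{k-1} φ^{(k)}(0) ≥ 0 for k ≥ 1. -/
theorem stmt3 (C α : ℝ) (γ : ℕ → ℝ) (hC : 0 < C) (hα : 0 ≤ α)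
    (hγ : ∀ j, 0 ≤ γ j) (hmono : Antitone γ) (hsum : Summable γ)
    (φ : ℂ → ℂ) (hφa : AnalyticAt ℂ φ 0)
    (hφ : ∀ᶠ z in nhds (0 : ℂ), Complex.exp (φ z)
        = (C : ℂ) * Complex.exp ((α : ℂ) * z) * ∏' j, (1 + (γ j : ℂ) * z)) :
    ∀ k : ℕ, 1 ≤ k → (iteratedDeriv k φ 0).im = 0 ∧
      0 ≤ (-1 : ℝ) ^ (k - 1) * (iteratedDeriv k φ 0).re := by
  have hγ0 : ∀ j, γ j ≤ γ 0 := fun j => hmono (Nat.zero_le j)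
  set S : ℕ → ℝ := fun k => ∑' j, γ j ^ k with hSdef
  have hSnn : ∀ k, 0 ≤ S k := fun k => tsum_nonneg fun j => pow_nonneg (hγ j) k
  have hS1nn : 0 ≤ S 1 := hSnn 1
  set c : ℕ → ℝ := fun k => (if k = 0 then Real.log C else 0) + (if k = 1 then α else 0)
      + (-1) ^ (k + 1) * S k / k with hcdef
  set p : FormalMultilinearSeries ℂ ℂ ℂ :=
      FormalMultilinearSeries.ofScalars ℂ (fun k => (c k : ℂ)) with hpdef
  set r : ℝ := (2 * (γ 0 + 1))⁻¹ with hrdef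
  have h2pos : (0:ℝ) < 2 * (γ 0 + 1) := by nlinarith [hγ 0]
  have hr0 : 0 < r := by rw [hrdef, inv_pos]; exact h2pos
  have hγr : ∀ j, γ j * r ≤ 1 / 2 := by
    intro j
    have h1 : γ 0 * r ≤ 1 / 2 := by
      rw [hrdef, ← div_eq_mul_inv, div_le_div_iff₀ h2pos two_pos]
      nlinarith [hγ 0]
    calc γ j * r ≤ γ 0 * r := mul_le_mul_of_nonneg_right (hγ0 j) hr0.le
      _ ≤ 1 / 2 := h1
  -- summability of power sums
  have hSk : ∀ m : ℕ, Summable (fun j => γ j ^ (m + 1)) := by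
    intro m
    refine ((hsum.mul_left ((γ 0) ^ m)).of_nonneg_of_le
      (fun j => pow_nonneg (hγ j) _) (fun j => ?_))
    have h1 : γ j ^ m ≤ γ 0 ^ m := pow_le_pow_left₀ (hγ j) (hγ0 j) m
    calc γ j ^ (m + 1) = γ j ^ m * γ j := by rw [pow_succ]
      _ ≤ γ 0 ^ m * γ j := mul_le_mul_of_nonneg_right h1 (hγ j)
  have hSle : ∀ m : ℕ, S (m + 1) ≤ γ 0 ^ m * S 1 := by
    intro m
    have h1 : S (m + 1) ≤ ∑' j, γ 0 ^ m * γ j := by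
      refine Summable.tsum_le_tsum (fun j => ?_) (hSk m) (hsum.mul_left _)
      have h1 : γ j ^ m ≤ γ 0 ^ m := pow_le_pow_left₀ (hγ j) (hγ0 j) m
      calc γ j ^ (m + 1) = γ j ^ m * γ j := by rw [pow_succ]
        _ ≤ γ 0 ^ m * γ j := mul_le_mul_of_nonneg_right h1 (hγ j)
    calc S (m + 1) ≤ ∑' j, γ 0 ^ m * γ j := h1
      _ = γ 0 ^ m * ∑' j, γ j := tsum_mul_left
      _ = γ 0 ^ m * S 1 := by
          congr 1
          rw [hSdef]
          exact (tsum_congr fun j => (pow_one (γ j)).symm)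
  -- radius bound
  set rn : NNReal := ⟨r, hr0.le⟩ with hrndef
  have hpn : ∀ n, ‖p n‖ = |c n| := by
    intro n
    rw [hpdef, FormalMultilinearSeries.ofScalars_norm, Complex.norm_real, Real.norm_eq_abs]
  have hc0 : c 0 = Real.log C := by simp [hcdef]
  have hc1 : c 1 = α + S 1 := by norm_num [hcdef]
  have hck : ∀ m : ℕ, c (m + 2) = (-1) ^ (m + 3) * S (m + 2) / (m + 2) := by
    intro m; simp [hcdef]
  set M : ℝ := |Real.log C| + (α + S 1) * r with hMdef
  have hbound : ∀ n : ℕ, ‖p n‖ * (rn : ℝ) ^ n ≤ M := by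
    intro n
    have hrn : (rn : ℝ) = r := rfl
    rw [hpn, hrn]
    have hMaux : 0 ≤ (α + S 1) * r := mul_nonneg (by linarith) hr0.le
    match n with
    | 0 =>
      simp only [pow_zero, mul_one, hc0, hMdef]
      linarith
    | 1 =>
      rw [hc1, _root_.abs_of_nonneg (by linarith), pow_one, hMdef]
      nlinarith [abs_nonneg (Real.log C)]
    | (m + 2) =>
      have h1 : |c (m + 2)| = S (m + 2) / ((m : ℝ) + 2) := by
        rw [hck m, _root_.abs_div, _root_.abs_mul, _root_.abs_pow, _root_.abs_neg,
          _root_.abs_one, one_pow, one_mul, _root_.abs_of_nonneg (hSnn _),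
          _root_.abs_of_nonneg (by positivity : (0:ℝ) ≤ (m : ℝ) + 2)]
      rw [h1]
      have hm0 : (0:ℝ) ≤ (m : ℝ) := Nat.cast_nonneg m
      have h2 : S (m + 2) / ((m:ℝ) + 2) ≤ S (m + 2) := by
        apply div_le_self (hSnn _); linarith
      have h3 : S (m + 2) ≤ γ 0 ^ (m + 1) * S 1 := hSle (m + 1)
      have h4 : (γ 0 * r) ^ (m + 1) ≤ 1 := by
        apply pow_le_one₀ (mul_nonneg (hγ 0) hr0.le)
        linarith [hγr 0]
      calc S (m + 2) / ((m:ℝ) + 2) * r ^ (m + 2) ≤ S (m + 2) * r ^ (m + 2) := by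
            apply mul_le_mul_of_nonneg_right h2 (by positivity)
        _ ≤ (γ 0 ^ (m + 1) * S 1) * r ^ (m + 2) := by
            apply mul_le_mul_of_nonneg_right h3 (by positivity)
        _ = (S 1 * r) * (γ 0 * r) ^ (m + 1) := by
            rw [pow_succ' r (m + 1), mul_pow]; ring
        _ ≤ (S 1 * r) * 1 := by
            apply mul_le_mul_of_nonneg_left h4 (mul_nonneg hS1nn hr0.le)
        _ ≤ M := by rw [hMdef]; nlinarith [abs_nonneg (Real.log C), mul_nonneg hα hr0.le]
  have hrad : (rn : ENNReal) ≤ p.radius := p.le_radius_of_bound M hbound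
  have hrnpos : (0 : ENNReal) < rn := by
    rw [ENNReal.coe_pos]; exact_mod_cast hr0
  have hball : HasFPowerSeriesOnBall p.sum p 0 rn :=
    (p.hasFPowerSeriesOnBall (lt_of_lt_of_le hrnpos hrad)).mono hrnpos hrad
  set ψ : ℂ → ℂ := p.sum with hψdef
  -- derivatives of ψ
  have hψk : ∀ k : ℕ, iteratedDeriv k ψ 0 = (Nat.factorial k : ℂ) * (c k : ℂ) := by
    intro k
    have h1 := hball.factorial_smul (y := (1 : ℂ)) k
    rw [iteratedDeriv_eq_iteratedFDeriv, ← h1, hpdef,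
      FormalMultilinearSeries.ofScalars_apply_eq]
    simp [nsmul_eq_mul]
  -- the key identity : exp (ψ z) = C e^{αz} ∏ (1 + γ_j z) for ‖z‖ < r
  have hexp : ∀ z : ℂ, ‖z‖ < r →
      Complex.exp (ψ z) = (C : ℂ) * Complex.exp ((α : ℂ) * z) * ∏' j, (1 + (γ j : ℂ) * z) := by
    intro z hz
    have hnormz : ∀ j, ‖(γ j : ℂ) * z‖ = γ j * ‖z‖ := by
      intro j
      rw [norm_mul, Complex.norm_real, Real.norm_eq_abs, _root_.abs_of_nonneg (hγ j)]
    have hz' : ∀ j, ‖(γ j : ℂ) * z‖ ≤ 1 / 2 := by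
      intro j
      rw [hnormz]
      calc γ j * ‖z‖ ≤ γ j * r := mul_le_mul_of_nonneg_left hz.le (hγ j)
        _ ≤ 1 / 2 := hγr j
    have hz1 : ∀ j, ‖(γ j : ℂ) * z‖ < 1 := fun j => lt_of_le_of_lt (hz' j) (by norm_num)
    have hne : ∀ j, (1 : ℂ) + (γ j : ℂ) * z ≠ 0 := by
      intro j h0
      have h2 : (γ j : ℂ) * z = -1 := by linear_combination h0
      have h3 := hz1 j
      rw [h2, norm_neg, norm_one] at h3
      exact absurd h3 (lt_irrefl 1)
    have hlog : ∀ j, HasSum (fun n : ℕ => (-1) ^ (n + 1) * ((γ j : ℂ) * z) ^ n / n)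
        (Complex.log (1 + (γ j : ℂ) * z)) := fun j => Complex.hasSum_taylorSeries_log (hz1 j)
    set G : ℕ × ℕ → ℂ := fun q => ((-1) ^ (q.2 + 1) * z ^ q.2 / q.2) * ((γ q.1 : ℂ)) ^ q.2
      with hGdef
    have hGeq : ∀ j n : ℕ, G (j, n) = (-1) ^ (n + 1) * ((γ j : ℂ) * z) ^ n / n := by
      intro j n; rw [hGdef]; simp only; rw [mul_pow]; ring
    -- summability of G
    have hhalf : Summable (fun n : ℕ => (1 / 2 : ℝ) ^ (n - 1)) := by
      refine ((summable_geometric_of_lt_one (by norm_num) (by norm_num : (1/2:ℝ) < 1)).mul_left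
        2).of_nonneg_of_le (fun n => by positivity) (fun n => ?_)
      match n with
      | 0 => norm_num
      | (m + 1) =>
        rw [Nat.add_sub_cancel, pow_succ]
        nlinarith [pow_nonneg (by norm_num : (0:ℝ) ≤ 1/2) m]
    have hGnorm : Summable (fun q => ‖G q‖) := by
      refine Summable.of_nonneg_of_le (fun q => norm_nonneg _) (fun q => ?_)
        ((hsum.mul_right ‖z‖).mul_of_nonneg hhalf
          (fun j => mul_nonneg (hγ j) (norm_nonneg z)) (fun n => by positivity))
      obtain ⟨j, n⟩ := q
      rw [hGeq]
      match n with
      | 0 =>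
        simp only [pow_zero, Nat.cast_zero, div_zero, mul_one, norm_zero]
        exact mul_nonneg (mul_nonneg (hγ j) (norm_nonneg z)) (by positivity)
      | (m + 1) =>
        have h1 : ‖(-1 : ℂ) ^ (m + 1 + 1) * ((γ j : ℂ) * z) ^ (m + 1) / ((m + 1 : ℕ) : ℂ)‖
            ≤ ‖(γ j : ℂ) * z‖ ^ (m + 1) := by
          rw [norm_div, norm_mul, norm_pow, norm_neg, norm_one, one_pow, one_mul, norm_pow]
          apply div_le_self (by positivity)
          simp only [Complex.norm_natCast]
          exact_mod_cast Nat.le_add_left 1 m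
        refine le_trans (by exact_mod_cast h1) ?_
        rw [Nat.add_sub_cancel, pow_succ' (‖(γ j : ℂ) * z‖) m, hnormz]
        have h2 : ‖(γ j : ℂ) * z‖ ^ m ≤ (1 / 2 : ℝ) ^ m :=
          pow_le_pow_left₀ (norm_nonneg _) (hz' j) m
        rw [hnormz] at h2
        exact mul_le_mul_of_nonneg_left h2 (mul_nonneg (hγ j) (norm_nonneg z))
    have hG : Summable G := hGnorm.of_norm
    have hrow : ∀ j, HasSum (fun n => G (j, n)) (Complex.log (1 + (γ j : ℂ) * z)) :=
      fun j => (hlog j).congr_fun (hGeq j)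
    have hLsum : Summable (fun j => Complex.log (1 + (γ j : ℂ) * z)) := by
      refine Summable.of_norm_bounded (g := fun j => 3 / 2 * (γ j * ‖z‖))
        ((hsum.mul_right ‖z‖).mul_left (3 / 2)) (fun j => ?_)
      have h1 := Complex.norm_log_one_add_half_le_self (hz' j)
      rwa [hnormz] at h1
    have col_val : ∀ n : ℕ, ∑' j, G (j, n)
        = ((-1) ^ (n + 1) * z ^ n / n) * ((S n : ℝ) : ℂ) := by
      intro n
      have h1 : ∑' j, G (j, n) = ((-1) ^ (n + 1) * z ^ n / n) * ∑' j, ((γ j : ℂ)) ^ n := by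
        simp only [hGdef]
        exact tsum_mul_left
      rw [h1]
      congr 1
      have h2 : ((S n : ℝ) : ℂ) = ∑' j, ((γ j : ℂ)) ^ n := by
        have h3 : ((S n : ℝ) : ℂ) = ((∑' j, γ j ^ n : ℝ) : ℂ) := rfl
        rw [h3, Complex.ofReal_tsum]
        exact tsum_congr fun j => by norm_cast
      rw [h2]
    have hfub : ∑' j, ∑' n, G (j, n) = ∑' n, ∑' j, G (j, n) :=
      (Summable.tsum_comm (f := fun j n => G (j, n)) hG).symm
    have hLeq : (∑' j, Complex.log (1 + (γ j : ℂ) * z))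
        = ∑' n : ℕ, ((-1) ^ (n + 1) * z ^ n / n) * ((S n : ℝ) : ℂ) := by
      calc ∑' j, Complex.log (1 + (γ j : ℂ) * z) = ∑' j, ∑' n, G (j, n) :=
            tsum_congr fun j => ((hrow j).tsum_eq).symm
        _ = ∑' n, ∑' j, G (j, n) := hfub
        _ = ∑' n : ℕ, ((-1) ^ (n + 1) * z ^ n / n) * ((S n : ℝ) : ℂ) := tsum_congr col_val
    have hDsum : Summable (fun n : ℕ => ((-1) ^ (n + 1) * z ^ n / n) * ((S n : ℝ) : ℂ)) :=
      (hG.prod_symm.prod).congr (fun n => col_val n)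
    have hψz : ψ z = ((Real.log C : ℝ) : ℂ) + (α : ℂ) * z
        + ∑' j, Complex.log (1 + (γ j : ℂ) * z) := by
      have h1 : ψ z = ∑' n : ℕ, ((c n : ℝ) : ℂ) • z ^ n :=
        FormalMultilinearSeries.ofScalars_sum_eq (fun k => ((c k : ℝ) : ℂ)) z
      have hterm : ∀ n : ℕ, ((c n : ℝ) : ℂ) • z ^ n
          = ((if n = 0 then ((Real.log C : ℝ) : ℂ) else 0)
            + (if n = 1 then (α : ℂ) * z else 0))
            + ((-1) ^ (n + 1) * z ^ n / n) * ((S n : ℝ) : ℂ) := by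
        intro n
        match n with
        | 0 => simp [hc0]
        | 1 =>
          simp only [smul_eq_mul, hc1, if_neg (by norm_num : (1:ℕ) ≠ 0), if_pos rfl,
            Nat.cast_one, pow_one, div_one]
          push_cast
          ring
        | (m + 2) =>
          rw [hck m]
          simp only [smul_eq_mul, if_neg (by omega : ¬ (m + 2 = 0)),
            if_neg (by omega : ¬ (m + 2 = 1)), zero_add]
          push_cast
          ring
      rw [h1, tsum_congr hterm,
        Summable.tsum_add ((hasSum_ite_eq 0 _).summable.add (hasSum_ite_eq 1 _).summable) hDsum,
        Summable.tsum_add (hasSum_ite_eq 0 _).summable (hasSum_ite_eq 1 _).summable,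
        tsum_ite_eq, tsum_ite_eq, ← hLeq]
    rw [hψz, Complex.exp_add, Complex.exp_add]
    have hC' : Complex.exp ((Real.log C : ℝ) : ℂ) = (C : ℂ) := by
      rw [← Complex.ofReal_exp, Real.exp_log hC]
    have hprod : HasProd (fun j => 1 + (γ j : ℂ) * z)
        (Complex.exp (∑' j, Complex.log (1 + (γ j : ℂ) * z))) := by
      have h2 := hLsum.hasSum.cexp
      have h3 : (Complex.exp ∘ fun j => Complex.log (1 + (γ j : ℂ) * z))
          = fun j => 1 + (γ j : ℂ) * z := funext fun j => Complex.exp_log (hne j)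
      rwa [h3] at h2
    rw [hC', hprod.tprod_eq]
  -- φ agrees with ψ + constant near 0
  have hballnhds : ∀ᶠ z in nhds (0:ℂ), ‖z‖ < r := by
    filter_upwards [Metric.ball_mem_nhds (0:ℂ) hr0] with z hz
    rwa [Metric.mem_ball, dist_zero_right] at hz
  have heq1 : ∀ᶠ z in nhds (0:ℂ), Complex.exp (φ z) = Complex.exp (ψ z) := by
    filter_upwards [hφ, hballnhds] with z h1 h2
    rw [h1, hexp z h2]
  have hint : ∀ᶠ z in nhds (0:ℂ), ∃ m : ℤ,
      φ z - ψ z = m * (2 * Real.pi * Complex.I) := by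
    filter_upwards [heq1] with z h1
    rw [← Complex.exp_eq_one_iff, Complex.exp_sub, h1, div_self (Complex.exp_ne_zero _)]
  obtain ⟨m0, hm0⟩ := hint.self_of_nhds
  have hcont : ContinuousAt (fun z => φ z - ψ z) 0 :=
    hφa.continuousAt.sub hball.analyticAt.continuousAt
  have hdist : ∀ᶠ z in nhds (0:ℂ), ‖(φ z - ψ z) - (φ 0 - ψ 0)‖ < 2 * Real.pi := by
    have h2 : (0:ℝ) < 2 * Real.pi := by linarith [Real.pi_pos]
    filter_upwards [Metric.tendsto_nhds.mp hcont.tendsto (2 * Real.pi) h2] with z hz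
    rwa [dist_eq_norm] at hz
  have hev : ∀ᶠ z in nhds (0:ℂ), φ z = (φ 0 - ψ 0) + ψ z := by
    filter_upwards [hint, hdist] with z hm hd
    obtain ⟨m, hm⟩ := hm
    have h3 : ((m - m0 : ℤ) : ℂ) * (2 * Real.pi * Complex.I)
        = (φ z - ψ z) - (φ 0 - ψ 0) := by
      rw [hm, hm0]
      push_cast
      ring
    have h5 : ‖((m - m0 : ℤ) : ℂ) * (2 * Real.pi * Complex.I)‖
        = ‖((m - m0 : ℤ) : ℂ)‖ * (2 * Real.pi) := by
      rw [norm_mul]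
      congr 1
      rw [norm_mul, Complex.norm_I, mul_one, norm_mul, Complex.norm_real,
        Real.norm_eq_abs, _root_.abs_of_nonneg Real.pi_nonneg]
      norm_num
    have h4 : ‖((m - m0 : ℤ) : ℂ)‖ * (2 * Real.pi) < 2 * Real.pi := by
      rw [← h5, h3]; exact hd
    have h6 : m = m0 := by
      by_contra h7
      have h8 : (1:ℝ) ≤ ‖((m - m0 : ℤ) : ℂ)‖ := by
        have h9 : ((m - m0 : ℤ) : ℂ) = (((m - m0 : ℤ) : ℝ) : ℂ) := by push_cast; ring
        rw [h9, Complex.norm_real, Real.norm_eq_abs]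
        exact_mod_cast Int.one_le_abs (sub_ne_zero.mpr h7)
      nlinarith [Real.pi_pos]
    rw [h6] at hm
    linear_combination hm - hm0
  -- conclusion
  intro k hk
  have e1 : iteratedDeriv k φ 0 = iteratedDeriv k (fun z => (φ 0 - ψ 0) + ψ z) 0 :=
    sign_iteratedDeriv_congr_nhds hev
  have e2 : iteratedDeriv k (fun z => (φ 0 - ψ 0) + ψ z) 0 = iteratedDeriv k ψ 0 :=
    sign_iteratedDeriv_const_add hk _ _
  have e3 : iteratedDeriv k φ 0 = (((Nat.factorial k : ℝ) * c k : ℝ) : ℂ) := by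
    rw [e1, e2, hψk k]
    push_cast
    ring
  rw [e3, Complex.ofReal_im, Complex.ofReal_re]
  refine ⟨rfl, ?_⟩
  by_cases hk1 : k = 1
  · subst hk1
    have h9 : (-1:ℝ) ^ (1 - 1) * ((Nat.factorial 1 : ℝ) * c 1) = α + S 1 := by
      rw [hc1]; norm_num
    rw [h9]
    linarith
  · obtain ⟨m, rfl⟩ : ∃ m, k = m + 2 := ⟨k - 2, by omega⟩
    have hsign : (-1:ℝ) ^ (m + 1) * (-1:ℝ) ^ (m + 3) = 1 := by
      rw [← pow_add, show (m+1)+(m+3) = 2*(m+2) by ring, pow_mul]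
      norm_num
    have hkk : (m + 2) - 1 = m + 1 := rfl
    rw [hkk, hck m]
    have h9 : (-1:ℝ) ^ (m + 1)
          * ((Nat.factorial (m+2) : ℝ) * ((-1) ^ (m+3) * S (m+2) / ((m:ℝ) + 2)))
        = (Nat.factorial (m+2) : ℝ) * (S (m+2) / ((m:ℝ) + 2)) := by
      calc (-1:ℝ) ^ (m + 1)
            * ((Nat.factorial (m+2) : ℝ) * ((-1) ^ (m+3) * S (m+2) / ((m:ℝ) + 2)))
          = ((-1:ℝ) ^ (m+1) * (-1) ^ (m+3))
            * ((Nat.factorial (m+2) : ℝ) * (S (m+2) / ((m:ℝ) + 2))) := by ring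
        _ = (Nat.factorial (m+2) : ℝ) * (S (m+2) / ((m:ℝ) + 2)) := by rw [hsign]; ring
    rw [h9]
    have h10 : (0:ℝ) ≤ S (m + 2) / ((m:ℝ) + 2) := div_nonneg (hSnn _) (by positivity)
    positivity
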